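/- Let C be a finite set of class labels with |C| ≥ 2, let {M_c}_{c∈C} be a POVM on ℂ^N, and let ρ be a density matrix on ℂ^N. Set p_c := Tr[M_c ρ] and let c* ∈ C satisfy p_{c*} ≥ p_c for all c ∈ C. Then for every density matrix σ on ℂ^N with 1 − F(ρ, σ) ≤ min_{c ≠ c*} (1/2)(√(p_{c*}) − √(p_c))², it holds that Tr[M_{c*} σ] ≥ Tr[M_c σ] for every c ≠ c*. -/

import Mathlib

open Matrix
open scoped ComplexOrder

/-- Positive-semidefinite square root of a matrix (zero if not PSD). -/
noncomputable def psdSqrt {N : ℕ} (A : Matrix (Fin N) (Fin N) ℂ) :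
    Matrix (Fin N) (Fin N) ℂ :=
  open scoped Classical in
  if h : A.PosSemidef then
    (h.1.eigenvectorUnitary : Matrix (Fin N) (Fin N) ℂ) *
      diagonal ((↑) ∘ (√·) ∘ h.1.eigenvalues) *
      (star h.1.eigenvectorUnitary : Matrix (Fin N) (Fin N) ℂ)
  else 0

/-- Root fidelity `Tr √(√ρ σ √ρ)`. -/
noncomputable def rootFidelity {N : ℕ} (ρ σ : Matrix (Fin N) (Fin N) ℂ) : ℝ :=
  (psdSqrt (psdSqrt ρ * σ * psdSqrt ρ)).trace.re

/-- Fidelity `F(ρ,σ) = (Tr √(√ρ σ √ρ))²`. -/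
noncomputable def fidelity {N : ℕ} (ρ σ : Matrix (Fin N) (Fin N) ℂ) : ℝ :=
  (rootFidelity ρ σ) ^ 2

/-- A density matrix: positive semidefinite with trace one. -/
def IsDensityMatrix {N : ℕ} (ρ : Matrix (Fin N) (Fin N) ℂ) : Prop :=
  ρ.PosSemidef ∧ ρ.trace = 1

/-- A POVM: a family of PSD matrices summing to the identity. -/
def IsPOVM {N : ℕ} {C : Type*} [Fintype C] (M : C → Matrix (Fin N) (Fin N) ℂ) : Prop :=
  (∀ c, (M c).PosSemidef) ∧ ∑ c, M c = 1

/-- A Kraus family: `∑ Eₖᴴ Eₖ = I`. -/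
def IsKrausFamily {N : ℕ} {K : Type*} [Fintype K] (E : K → Matrix (Fin N) (Fin N) ℂ) : Prop :=
  ∑ k, (E k)ᴴ * E k = 1

/-- The quantum channel associated with a Kraus family. -/
noncomputable def channel {N : ℕ} {K : Type*} [Fintype K]
    (E : K → Matrix (Fin N) (Fin N) ℂ) (σ : Matrix (Fin N) (Fin N) ℂ) :
    Matrix (Fin N) (Fin N) ℂ :=
  ∑ k, E k * σ * (E k)ᴴ

/-- Minimum of `f` over all labels distinct from `cstar` (needs `|C| ≥ 2`). -/
noncomputable def minErase {C : Type*} [Fintype C] [DecidableEq C] {α : Type*} [LinearOrder α]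
    (cstar : C) (h : 1 < Fintype.card C) (f : C → α) : α :=
  (Finset.univ.erase cstar).inf'
    ((Finset.erase_nonempty (Finset.mem_univ cstar)).mpr
      (Finset.one_lt_card_iff_nontrivial.mp (by simpa [Finset.card_univ] using h))) f

section AuxRobust

variable {N : ℕ}

private lemma trace_nonneg_of_psd {A : Matrix (Fin N) (Fin N) ℂ} (hA : A.PosSemidef) :
    0 ≤ A.trace := by
  have h : ∀ i, 0 ≤ A i i := fun i => hA.diag_nonneg
  exact Finset.sum_nonneg fun i _ => h i

private lemma psdSqrt_psd' (A : Matrix (Fin N) (Fin N) ℂ) : (psdSqrt A).PosSemidef := by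
  rw [psdSqrt]
  split
  · exact (posSemidef_diagonal_iff.mpr fun i =>
      Complex.zero_le_real.mpr (Real.sqrt_nonneg _)).mul_mul_conjTranspose_same _
  · exact Matrix.PosSemidef.zero

private lemma psdSqrt_mul_self' {A : Matrix (Fin N) (Fin N) ℂ} (hA : A.PosSemidef) :
    psdSqrt A * psdSqrt A = A := by
  rw [psdSqrt, dif_pos hA]
  have hU : (star hA.1.eigenvectorUnitary : Matrix (Fin N) (Fin N) ℂ) *
      (hA.1.eigenvectorUnitary : Matrix (Fin N) (Fin N) ℂ) = 1 :=
    Unitary.coe_star_mul_self _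
  have hspec := hA.1.spectral_theorem
  rw [Unitary.conjStarAlgAut_apply] at hspec
  calc _ = (hA.1.eigenvectorUnitary : Matrix (Fin N) (Fin N) ℂ) *
        (diagonal ((↑) ∘ (√·) ∘ hA.1.eigenvalues) *
          ((star hA.1.eigenvectorUnitary : Matrix (Fin N) (Fin N) ℂ) *
            (hA.1.eigenvectorUnitary : Matrix (Fin N) (Fin N) ℂ)) *
          diagonal ((↑) ∘ (√·) ∘ hA.1.eigenvalues)) *
        (star hA.1.eigenvectorUnitary : Matrix (Fin N) (Fin N) ℂ) := by
          simp only [Matrix.mul_assoc]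
    _ = _ := by
      rw [hU, Matrix.mul_one, diagonal_mul_diagonal]
      conv_rhs => rw [hspec]
      congr 3
      funext i
      simp [← Complex.ofReal_mul, Real.mul_self_sqrt (hA.eigenvalues_nonneg i)]

private lemma trace_mul_psd_nonneg {A B : Matrix (Fin N) (Fin N) ℂ} (hA : A.PosSemidef)
    (hB : B.PosSemidef) : 0 ≤ (A * B).trace := by
  have h1 : A * B = psdSqrt A * (psdSqrt A * B) := by
    rw [← Matrix.mul_assoc, psdSqrt_mul_self' hA]
  rw [h1, Matrix.trace_mul_comm]
  exact trace_nonneg_of_psd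
    (by simpa [(psdSqrt_psd' A).1.eq] using hB.conjTranspose_mul_mul_same (psdSqrt A))

private lemma trace_eq_re {z : ℂ} (hz : 0 ≤ z) : z = (z.re : ℝ) ∧ (0:ℝ) ≤ z.re := by
  obtain ⟨h1, h2⟩ := Complex.nonneg_iff.mp hz
  exact ⟨Complex.ext (by simp) (by simp [← h2]), h1⟩

private lemma psdSqrt_posSemidef (A : Matrix (Fin N) (Fin N) ℂ) : (psdSqrt A).PosSemidef := by
  rw [psdSqrt]
  split
  · exact (posSemidef_diagonal_iff.mpr fun i =>
      Complex.zero_le_real.mpr (Real.sqrt_nonneg _)).mul_mul_conjTranspose_same _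
  · exact Matrix.PosSemidef.zero

private lemma cs_trace (X Y : Matrix (Fin N) (Fin N) ℂ) :
    ‖(Xᴴ * Y).trace‖ ≤
      Real.sqrt ((Xᴴ * X).trace.re) * Real.sqrt ((Yᴴ * Y).trace.re) := by
  have trace_conj_sq : ∀ Z : Matrix (Fin N) (Fin N) ℂ,
      (Zᴴ * Z).trace.re = ∑ q : Fin N × Fin N, ‖Z q.2 q.1‖ ^ 2 := by
    intro Z
    have h : (Zᴴ * Z).trace = ∑ q : Fin N × Fin N, (starRingEnd ℂ) (Z q.2 q.1) * Z q.2 q.1 := by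
      rw [Matrix.trace, Fintype.sum_prod_type]
      simp [Matrix.diag, Matrix.mul_apply, Matrix.conjTranspose_apply, Complex.star_def]
    rw [h, Complex.re_sum]
    congr 1; ext q
    rw [← Complex.normSq_eq_conj_mul_self, Complex.sq_norm]
    simp
  have h : (Xᴴ * Y).trace = ∑ q : Fin N × Fin N, (starRingEnd ℂ) (X q.2 q.1) * Y q.2 q.1 := by
    rw [Matrix.trace, Fintype.sum_prod_type]
    simp [Matrix.diag, Matrix.mul_apply, Matrix.conjTranspose_apply, Complex.star_def]
  rw [h, trace_conj_sq, trace_conj_sq]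
  calc ‖∑ q : Fin N × Fin N, (starRingEnd ℂ) (X q.2 q.1) * Y q.2 q.1‖
      ≤ ∑ q : Fin N × Fin N, ‖(starRingEnd ℂ) (X q.2 q.1) * Y q.2 q.1‖ := by
        exact (norm_sum_le _ _)
    _ = ∑ q : Fin N × Fin N, ‖X q.2 q.1‖ * ‖Y q.2 q.1‖ := by
        simp [norm_mul]
    _ ≤ _ := Real.sum_mul_le_sqrt_mul_sqrt _ _ _

private lemma exists_contraction (B : Matrix (Fin N) (Fin N) ℂ) :
    ∃ U : Matrix (Fin N) (Fin N) ℂ,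
      (U * B).trace = (psdSqrt (Bᴴ * B)).trace ∧ (1 - Uᴴ * U).PosSemidef := by
  have hH : (Bᴴ * B).PosSemidef := Matrix.posSemidef_conjTranspose_mul_self B
  obtain ⟨V, e, hVV, he0, hHspec, hSsqrt⟩ :
      ∃ (V : Matrix (Fin N) (Fin N) ℂ) (e : Fin N → ℝ),
        Vᴴ * V = 1 ∧ (∀ i, 0 ≤ e i) ∧
        Bᴴ * B = V * diagonal (fun i => (e i : ℂ)) * Vᴴ ∧
        psdSqrt (Bᴴ * B) = V * diagonal (fun i => (Real.sqrt (e i) : ℂ)) * Vᴴ := by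
    refine ⟨hH.1.eigenvectorUnitary, hH.1.eigenvalues, ?_, hH.eigenvalues_nonneg, ?_, ?_⟩
    · rw [← Matrix.star_eq_conjTranspose]
      exact Unitary.coe_star_mul_self _
    · have hspec := hH.1.spectral_theorem
      rw [Unitary.conjStarAlgAut_apply] at hspec
      exact hspec
    · rw [psdSqrt, dif_pos hH]
      rfl
  set g : Fin N → ℂ := fun i => if e i = 0 then 0 else ((Real.sqrt (e i))⁻¹ : ℂ) with hg
  have key : ∀ f₁ f₂ : Fin N → ℂ,
      (V * diagonal f₁ * Vᴴ) * (V * diagonal f₂ * Vᴴ)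
        = V * diagonal (fun i => f₁ i * f₂ i) * Vᴴ := by
    intro f₁ f₂
    calc (V * diagonal f₁ * Vᴴ) * (V * diagonal f₂ * Vᴴ)
        = V * diagonal f₁ * ((Vᴴ * V) * (diagonal f₂ * Vᴴ)) := by
          simp only [Matrix.mul_assoc]
      _ = V * (diagonal f₁ * diagonal f₂) * Vᴴ := by
          rw [hVV, Matrix.one_mul]; simp only [Matrix.mul_assoc]
      _ = _ := by rw [Matrix.diagonal_mul_diagonal]
  have tr_conj : ∀ f : Fin N → ℂ, (V * diagonal f * Vᴴ).trace = ∑ i, f i := by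
    intro f
    rw [Matrix.trace_mul_cycle, hVV, Matrix.one_mul, Matrix.trace_diagonal]
  have hstar_g : star g = g := by
    funext i
    by_cases h : e i = 0 <;> simp [hg, h]
  have hSpH : (V * diagonal g * Vᴴ)ᴴ = V * diagonal g * Vᴴ := by
    simp only [Matrix.conjTranspose_mul, Matrix.conjTranspose_conjTranspose,
      Matrix.diagonal_conjTranspose, hstar_g, Matrix.mul_assoc]
  have hge : ∀ i, g i * (e i : ℂ) = (Real.sqrt (e i) : ℂ) := by
    intro i
    by_cases h : e i = 0
    · simp [hg, h]
    · have hsq : (Real.sqrt (e i) : ℂ) * (Real.sqrt (e i) : ℂ) = (e i : ℂ) := by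
        rw [← Complex.ofReal_mul, Real.mul_self_sqrt (he0 i)]
      have hne : (Real.sqrt (e i) : ℂ) ≠ 0 := by
        simpa using Real.sqrt_ne_zero'.mpr (lt_of_le_of_ne (he0 i) (Ne.symm h))
      simp only [hg, if_neg h]
      rw [← hsq]
      field_simp
  have hgg_e : ∀ i, (g i * g i * (e i : ℂ)) * (g i * g i) = g i * g i := by
    intro i
    by_cases h : e i = 0
    · simp [hg, h]
    · have hsq : (Real.sqrt (e i) : ℂ) * (Real.sqrt (e i) : ℂ) = (e i : ℂ) := by
        rw [← Complex.ofReal_mul, Real.mul_self_sqrt (he0 i)]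
      have hne : (Real.sqrt (e i) : ℂ) ≠ 0 := by
        simpa using Real.sqrt_ne_zero'.mpr (lt_of_le_of_ne (he0 i) (Ne.symm h))
      simp only [hg, if_neg h]
      rw [← hsq]
      field_simp
  refine ⟨(V * diagonal g * Vᴴ) * Bᴴ, ?_, ?_⟩
  · have h1 : (V * diagonal g * Vᴴ) * Bᴴ * B
        = (V * diagonal g * Vᴴ) * (V * diagonal (fun i => (e i : ℂ)) * Vᴴ) := by
      rw [Matrix.mul_assoc, ← hHspec]
    rw [h1, key, hSsqrt, tr_conj, tr_conj]
    exact Finset.sum_congr rfl fun i _ => hge i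
  · have hUH : ((V * diagonal g * Vᴴ) * Bᴴ)ᴴ = B * (V * diagonal g * Vᴴ) := by
      rw [Matrix.conjTranspose_mul, Matrix.conjTranspose_conjTranspose, hSpH]
    have hUU : ((V * diagonal g * Vᴴ) * Bᴴ)ᴴ * ((V * diagonal g * Vᴴ) * Bᴴ)
        = B * (V * diagonal (fun i => g i * g i) * Vᴴ) * Bᴴ := by
      rw [hUH, ← key]
      simp only [Matrix.mul_assoc]
    have hWHW : (V * diagonal (fun i => g i * g i) * Vᴴ) * (Bᴴ * B)
          * (V * diagonal (fun i => g i * g i) * Vᴴ)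
        = V * diagonal (fun i => g i * g i) * Vᴴ := by
      rw [hHspec, key, key]
      simp only [hgg_e]
    have hPP : (B * (V * diagonal (fun i => g i * g i) * Vᴴ) * Bᴴ)
          * (B * (V * diagonal (fun i => g i * g i) * Vᴴ) * Bᴴ)
        = B * (V * diagonal (fun i => g i * g i) * Vᴴ) * Bᴴ := by
      calc (B * (V * diagonal (fun i => g i * g i) * Vᴴ) * Bᴴ)
            * (B * (V * diagonal (fun i => g i * g i) * Vᴴ) * Bᴴ)
          = B * ((V * diagonal (fun i => g i * g i) * Vᴴ) * (Bᴴ * B)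
              * (V * diagonal (fun i => g i * g i) * Vᴴ)) * Bᴴ := by
            simp only [Matrix.mul_assoc]
        _ = _ := by rw [hWHW]
    have hPP' : (((V * diagonal g * Vᴴ) * Bᴴ)ᴴ * ((V * diagonal g * Vᴴ) * Bᴴ))
          * (((V * diagonal g * Vᴴ) * Bᴴ)ᴴ * ((V * diagonal g * Vᴴ) * Bᴴ))
        = ((V * diagonal g * Vᴴ) * Bᴴ)ᴴ * ((V * diagonal g * Vᴴ) * Bᴴ) := by
      rw [hUU]; exact hPP
    have hPH : (((V * diagonal g * Vᴴ) * Bᴴ)ᴴ * ((V * diagonal g * Vᴴ) * Bᴴ))ᴴ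
        = ((V * diagonal g * Vᴴ) * Bᴴ)ᴴ * ((V * diagonal g * Vᴴ) * Bᴴ) := by
      simp only [Matrix.conjTranspose_mul, Matrix.conjTranspose_conjTranspose]
    set P := ((V * diagonal g * Vᴴ) * Bᴴ)ᴴ * ((V * diagonal g * Vᴴ) * Bᴴ) with hPdef
    have hid : (1 - P)ᴴ * (1 - P) = 1 - P := by
      rw [Matrix.conjTranspose_sub, Matrix.conjTranspose_one, hPH,
        Matrix.mul_sub, Matrix.mul_one, Matrix.sub_mul, Matrix.one_mul, hPP']
      abel
    have := Matrix.posSemidef_conjTranspose_mul_self (1 - P)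
    rwa [hid] at this

private lemma trace_conj_form {m s A B : Matrix (Fin N) (Fin N) ℂ} (hm : mᴴ = m) (hs : sᴴ = s)
    (hmm : m * m = A) (hss : s * s = B) : ((s * m)ᴴ * (s * m)).trace = (A * B).trace := by
  have h1 : (s * m)ᴴ * (s * m) = m * (s * (s * m)) := by
    simp only [Matrix.conjTranspose_mul, hm, hs, Matrix.mul_assoc]
  rw [h1, Matrix.trace_mul_comm]
  have h2 : s * (s * m) * m = B * A := by
    rw [← Matrix.mul_assoc, hss, Matrix.mul_assoc, hmm]
  rw [h2, Matrix.trace_mul_comm]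

private lemma rootFidelity_le_BC {C : Type*} [Fintype C]
    (M : C → Matrix (Fin N) (Fin N) ℂ) (hM : IsPOVM M)
    {ρ σ : Matrix (Fin N) (Fin N) ℂ} (hρ : ρ.PosSemidef) (hσ : σ.PosSemidef) :
    rootFidelity ρ σ ≤
      ∑ c, Real.sqrt ((M c * ρ).trace.re) * Real.sqrt ((M c * σ).trace.re) := by
  obtain ⟨sρ, hsρeq, hsρH, hsρρ⟩ :
      ∃ s : Matrix (Fin N) (Fin N) ℂ, psdSqrt ρ = s ∧ sᴴ = s ∧ s * s = ρ :=
    ⟨psdSqrt ρ, rfl, (psdSqrt_psd' ρ).1, psdSqrt_mul_self' hρ⟩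
  obtain ⟨sσ, hsσH, hsσσ⟩ :
      ∃ s : Matrix (Fin N) (Fin N) ℂ, sᴴ = s ∧ s * s = σ :=
    ⟨psdSqrt σ, (psdSqrt_psd' σ).1, psdSqrt_mul_self' hσ⟩
  obtain ⟨U, hUtr, hUc⟩ := exists_contraction (sσ * sρ)
  have hBB : (sσ * sρ)ᴴ * (sσ * sρ) = sρ * σ * sρ := by
    rw [Matrix.conjTranspose_mul, hsρH, hsσH, Matrix.mul_assoc, ← Matrix.mul_assoc sσ sσ sρ,
      hsσσ, ← Matrix.mul_assoc]
  have hRF : rootFidelity ρ σ = ((U * (sσ * sρ)).trace).re := by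
    rw [rootFidelity, hsρeq, ← hBB, hUtr]
  have hdec : U * (sσ * sρ) = ∑ c, U * sσ * M c * sρ := by
    have h : ∑ c, U * sσ * M c * sρ = U * sσ * (∑ c, M c) * sρ := by
      rw [← Finset.sum_mul, ← Finset.mul_sum]
    rw [h, hM.2, Matrix.mul_one, Matrix.mul_assoc]
  have hterm : ∀ c, ((U * sσ * M c * sρ).trace).re ≤
      Real.sqrt ((M c * ρ).trace.re) * Real.sqrt ((M c * σ).trace.re) := by
    intro c
    obtain ⟨mc, hmcH, hmcm⟩ :
        ∃ m : Matrix (Fin N) (Fin N) ℂ, mᴴ = m ∧ m * m = M c :=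
      ⟨psdSqrt (M c), (psdSqrt_psd' (M c)).1, psdSqrt_mul_self' (hM.1 c)⟩
    have e1 : (U * sσ * M c * sρ).trace = ((sρ * mc)ᴴ * (U * (sσ * mc))).trace := by
      have r1 : (sρ * mc)ᴴ * (U * (sσ * mc)) = (mc * sρ) * (U * (sσ * mc)) := by
        rw [Matrix.conjTranspose_mul, hmcH, hsρH]
      rw [r1, Matrix.trace_mul_comm (mc * sρ) (U * (sσ * mc))]
      congr 1
      rw [← hmcm]
      simp only [Matrix.mul_assoc]
    have eXX : ((sρ * mc)ᴴ * (sρ * mc)).trace = (M c * ρ).trace :=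
      trace_conj_form hmcH hsρH hmcm hsρρ
    have eYY : (((sσ * mc))ᴴ * (sσ * mc)).trace = (M c * σ).trace :=
      trace_conj_form hmcH hsσH hmcm hsσσ
    have hYY : ((U * (sσ * mc))ᴴ * (U * (sσ * mc))).trace.re ≤ (M c * σ).trace.re := by
      have hsplit : ((sσ * mc))ᴴ * (1 - Uᴴ * U) * (sσ * mc)
          = ((sσ * mc))ᴴ * (sσ * mc) - (U * (sσ * mc))ᴴ * (U * (sσ * mc)) := by
        rw [Matrix.mul_sub, Matrix.mul_one, Matrix.sub_mul]
        congr 1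
        simp only [Matrix.conjTranspose_mul, Matrix.mul_assoc]
      have hpsd := trace_nonneg_of_psd (hUc.conjTranspose_mul_mul_same (sσ * mc))
      rw [hsplit] at hpsd
      have h2 := (Complex.nonneg_iff.mp hpsd).1
      rw [Matrix.trace_sub, Complex.sub_re, eYY] at h2
      linarith
    have hYnn : 0 ≤ ((U * (sσ * mc))ᴴ * (U * (sσ * mc))).trace.re :=
      (Complex.nonneg_iff.mp (trace_nonneg_of_psd
        (Matrix.posSemidef_conjTranspose_mul_self _))).1
    calc ((U * sσ * M c * sρ).trace).re
        ≤ ‖(U * sσ * M c * sρ).trace‖ := Complex.re_le_norm _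
      _ = ‖((sρ * mc)ᴴ * (U * (sσ * mc))).trace‖ := by rw [e1]
      _ ≤ Real.sqrt (((sρ * mc)ᴴ * (sρ * mc)).trace.re)
            * Real.sqrt (((U * (sσ * mc))ᴴ * (U * (sσ * mc))).trace.re) := cs_trace _ _
      _ ≤ Real.sqrt ((M c * ρ).trace.re) * Real.sqrt ((M c * σ).trace.re) := by
          rw [eXX]
          exact mul_le_mul_of_nonneg_left (Real.sqrt_le_sqrt hYY) (Real.sqrt_nonneg _)
  calc rootFidelity ρ σ = ((U * (sσ * sρ)).trace).re := hRF
    _ = ∑ c, ((U * sσ * M c * sρ).trace).re := by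
        rw [hdec, Matrix.trace_sum, Complex.re_sum]
    _ ≤ _ := Finset.sum_le_sum fun c _ => hterm c

private lemma cs_two {S₁ S₂ W₁ W₂ Z₁ Z₂ : ℝ} (hS₁ : 0 ≤ S₁) (hS₂ : 0 ≤ S₂)
    (hW₁ : 0 ≤ W₁) (hW₂ : 0 ≤ W₂) (hZ₁ : 0 ≤ Z₁) (hZ₂ : 0 ≤ Z₂)
    (h1 : S₁ ^ 2 ≤ W₁ * Z₁) (h2 : S₂ ^ 2 ≤ W₂ * Z₂) :
    (S₁ + S₂) ^ 2 ≤ (W₁ + W₂) * (Z₁ + Z₂) := by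
  have hm : S₁ ^ 2 * S₂ ^ 2 ≤ (W₁ * Z₁) * (W₂ * Z₂) :=
    mul_le_mul h1 h2 (sq_nonneg _) (mul_nonneg hW₁ hZ₁)
  have hcross : S₁ * S₂ ≤ (W₁ * Z₂ + W₂ * Z₁) / 2 := by
    have hv : 0 ≤ (W₁ * Z₂ + W₂ * Z₁) / 2 := by positivity
    have husq : (S₁ * S₂) ^ 2 ≤ ((W₁ * Z₂ + W₂ * Z₁) / 2) ^ 2 := by
      nlinarith [sq_nonneg (W₁ * Z₂ - W₂ * Z₁)]
    exact (pow_le_pow_iff_left₀ (mul_nonneg hS₁ hS₂) hv two_ne_zero).mp husq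
  nlinarith

set_option maxHeartbeats 1000000 in
private lemma strict_bound {a b x y Po Qo RF : ℝ}
    (ha : 0 < a) (hb : 0 ≤ b) (hba : b ≤ a) (hx : 0 ≤ x) (hxy : x < y)
    (hPo : 0 ≤ Po) (hQo : 0 ≤ Qo)
    (hsq : x ^ 2 + y ^ 2 + Qo = 1) (hsp : a ^ 2 + b ^ 2 + Po = 1)
    (hRFnn : 0 ≤ RF) (hRFle : RF ≤ a * x + b * y + Real.sqrt Po * Real.sqrt Qo) :
    RF ^ 2 < 1 - (1 / 2) * (a - b) ^ 2 := by
  obtain ⟨E, hEdef⟩ : ∃ E : ℝ,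
      (a + b) ^ 2 * (x ^ 2 + y ^ 2) / 2 - (a * x + b * y) ^ 2 = E := ⟨_, rfl⟩
  have hy : 0 ≤ y := le_trans hx hxy.le
  have hEpos : 0 < E := by
    rw [← hEdef]
    have hiden : (a + b) ^ 2 * (x ^ 2 + y ^ 2) / 2 - (a * x + b * y) ^ 2
        = a * b * (x - y) ^ 2 + (a ^ 2 - b ^ 2) * (y ^ 2 - x ^ 2) / 2 := by ring
    rw [hiden]
    have hsq1 : 0 < (x - y) ^ 2 := by
      nlinarith [mul_pos (sub_pos.mpr hxy) (sub_pos.mpr hxy)]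
    have hyx : (0:ℝ) ≤ y ^ 2 - x ^ 2 := by nlinarith
    have hab2 : (0:ℝ) ≤ a ^ 2 - b ^ 2 := by nlinarith
    by_cases hb0 : b = 0
    · have hab2' : (0:ℝ) < a ^ 2 - b ^ 2 := by nlinarith
      have hyx' : (0:ℝ) < y ^ 2 - x ^ 2 := by nlinarith
      have h3 : (0:ℝ) < (a ^ 2 - b ^ 2) * (y ^ 2 - x ^ 2) / 2 :=
        div_pos (mul_pos hab2' hyx') (by norm_num)
      have h4 : (0:ℝ) ≤ a * b * (x - y) ^ 2 :=
        mul_nonneg (mul_nonneg ha.le hb) hsq1.le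
      linarith
    · have hbpos : 0 < b := lt_of_le_of_ne hb (Ne.symm hb0)
      have h1 : 0 < a * b * (x - y) ^ 2 := mul_pos (mul_pos ha hbpos) hsq1
      have h2 : (0:ℝ) ≤ (a ^ 2 - b ^ 2) * (y ^ 2 - x ^ 2) / 2 :=
        div_nonneg (mul_nonneg hab2 hyx) (by norm_num)
      linarith
  have hZ1le1 : x ^ 2 + y ^ 2 ≤ 1 := by linarith
  have hW1nn : 0 ≤ (a + b) ^ 2 / 2 - E := by
    have hrw : (a + b) ^ 2 / 2 - E
        = (a + b) ^ 2 / 2 * (1 - (x ^ 2 + y ^ 2)) + (a * x + b * y) ^ 2 := by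
      rw [← hEdef]; ring
    rw [hrw]
    have h1 : 0 ≤ (a + b) ^ 2 / 2 * (1 - (x ^ 2 + y ^ 2)) :=
      mul_nonneg (by positivity) (by linarith)
    linarith [sq_nonneg (a * x + b * y)]
  have hS1sq : (a * x + b * y) ^ 2 ≤ ((a + b) ^ 2 / 2 - E) * (x ^ 2 + y ^ 2) := by
    have hrw : ((a + b) ^ 2 / 2 - E) * (x ^ 2 + y ^ 2) - (a * x + b * y) ^ 2
        = E * (1 - (x ^ 2 + y ^ 2)) + ((a + b) ^ 2 * (x ^ 2 + y ^ 2) / 2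
            - (a * x + b * y) ^ 2 - E) := by ring
    have hz : (a + b) ^ 2 * (x ^ 2 + y ^ 2) / 2 - (a * x + b * y) ^ 2 - E = 0 := by
      rw [← hEdef]; ring
    have h1 : 0 ≤ E * (1 - (x ^ 2 + y ^ 2)) := mul_nonneg hEpos.le (by linarith)
    linarith [hrw, hz]
  have hS2sq : (Real.sqrt Po * Real.sqrt Qo) ^ 2 ≤ Po * Qo := by
    rw [mul_pow, Real.sq_sqrt hPo, Real.sq_sqrt hQo]
  have hS1nn : 0 ≤ a * x + b * y := by positivity
  have hRF2 : RF ^ 2 ≤ (((a + b) ^ 2 / 2 - E) + Po) * ((x ^ 2 + y ^ 2) + Qo) := by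
    calc RF ^ 2 ≤ ((a * x + b * y) + Real.sqrt Po * Real.sqrt Qo) ^ 2 :=
          pow_le_pow_left₀ hRFnn (by linarith) 2
      _ ≤ _ := cs_two hS1nn (by positivity) hW1nn hPo (by positivity) hQo hS1sq hS2sq
  have hf2 : (x ^ 2 + y ^ 2) + Qo = 1 := by linarith
  have hf1 : ((a + b) ^ 2 / 2 - E) + Po = 1 - (1/2) * (a - b) ^ 2 - E := by
    have hPoval : Po = 1 - a ^ 2 - b ^ 2 := by linarith
    rw [hPoval]; ring
  rw [hf2, hf1, mul_one] at hRF2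
  linarith

end AuxRobust

set_option maxHeartbeats 1000000 in
/-- **Robustness lower bound for a measurement-only classifier.**
If the fidelity distance from ρ to σ is at most
`min_{c ≠ c*} (1/2)(√p_{c*} − √p_c)²`, then the prediction does not change. -/
theorem robustness_lower_bound_measurement
    {N : ℕ} {C : Type*} [Fintype C] [DecidableEq C]
    (hC : 1 < Fintype.card C)
    (M : C → Matrix (Fin N) (Fin N) ℂ) (hM : IsPOVM M)
    (ρ : Matrix (Fin N) (Fin N) ℂ) (hρ : IsDensityMatrix ρ)
    (p : C → ℝ) (hp : ∀ c, (p c : ℂ) = (M c * ρ).trace)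
    (cstar : C) (hcstar : ∀ c, p c ≤ p cstar)
    (σ : Matrix (Fin N) (Fin N) ℂ) (hσ : IsDensityMatrix σ)
    (hclose : 1 - fidelity ρ σ ≤
      minErase cstar hC fun c => (1 / 2) * (Real.sqrt (p cstar) - Real.sqrt (p c)) ^ 2) :
    ∀ c, c ≠ cstar → (M c * σ).trace ≤ (M cstar * σ).trace := by
  obtain ⟨q, hq⟩ : ∃ q : C → ℝ, ∀ c, (M c * σ).trace = (q c : ℂ) ∧ 0 ≤ q c :=
    ⟨fun c => ((M c * σ).trace).re,
      fun c => trace_eq_re (trace_mul_psd_nonneg (hM.1 c) hσ.1)⟩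
  have hp0 : ∀ c, 0 ≤ p c := by
    intro c
    have h := trace_mul_psd_nonneg (hM.1 c) hρ.1
    rw [← hp c] at h
    exact_mod_cast h
  have hpsum : ∑ c, p c = 1 := by
    have h : (((∑ c, p c : ℝ)) : ℂ) = 1 := by
      push_cast
      calc ∑ c, ((p c : ℝ) : ℂ) = ∑ c, (M c * ρ).trace := Finset.sum_congr rfl fun c _ => hp c
        _ = ((∑ c, M c) * ρ).trace := by rw [Finset.sum_mul, Matrix.trace_sum]
        _ = 1 := by rw [hM.2, Matrix.one_mul, hρ.2]
    exact_mod_cast h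
  have hqsum : ∑ c, q c = 1 := by
    have h : (((∑ c, q c : ℝ)) : ℂ) = 1 := by
      push_cast
      calc ∑ c, ((q c : ℝ) : ℂ) = ∑ c, (M c * σ).trace :=
            Finset.sum_congr rfl fun c _ => ((hq c).1).symm
        _ = ((∑ c, M c) * σ).trace := by rw [Finset.sum_mul, Matrix.trace_sum]
        _ = 1 := by rw [hM.2, Matrix.one_mul, hσ.2]
    exact_mod_cast h
  have hBC : rootFidelity ρ σ ≤ ∑ c, Real.sqrt (p c) * Real.sqrt (q c) := by
    have h := rootFidelity_le_BC M hM hρ.1 hσ.1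
    have he : ∀ c, Real.sqrt ((M c * ρ).trace.re) * Real.sqrt ((M c * σ).trace.re)
        = Real.sqrt (p c) * Real.sqrt (q c) := by
      intro c
      rw [← hp c, (hq c).1]
      simp
    calc rootFidelity ρ σ ≤ _ := h
      _ = _ := Finset.sum_congr rfl fun c _ => he c
  have hRFnn : 0 ≤ rootFidelity ρ σ :=
    (Complex.nonneg_iff.mp (trace_nonneg_of_psd (psdSqrt_posSemidef _))).1
  intro c0 hc0
  rw [(hq c0).1, (hq cstar).1, Complex.real_le_real]
  by_contra hcon
  push_neg at hcon
  have hlt : q cstar < q c0 := hcon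
  obtain ⟨a, b, x, y, hadef, hbdef, hxdef, hydef⟩ :
      ∃ a b x y : ℝ, Real.sqrt (p cstar) = a ∧ Real.sqrt (p c0) = b ∧
        Real.sqrt (q cstar) = x ∧ Real.sqrt (q c0) = y := ⟨_, _, _, _, rfl, rfl, rfl, rfl⟩
  have hpstar : 0 < p cstar := by
    by_contra h
    push_neg at h
    have h1 : (1:ℝ) ≤ 0 := by
      rw [← hpsum]
      exact Finset.sum_nonpos fun c _ => le_trans (hcstar c) h
    linarith
  have ha : 0 < a := by rw [← hadef]; exact Real.sqrt_pos.mpr hpstar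
  have hb : 0 ≤ b := by rw [← hbdef]; exact Real.sqrt_nonneg _
  have hba : b ≤ a := by rw [← hadef, ← hbdef]; exact Real.sqrt_le_sqrt (hcstar c0)
  have hx : 0 ≤ x := by rw [← hxdef]; exact Real.sqrt_nonneg _
  have hxy : x < y := by
    rw [← hxdef, ← hydef]; exact Real.sqrt_lt_sqrt (hq cstar).2 hlt
  have ha2 : a ^ 2 = p cstar := by rw [← hadef]; exact Real.sq_sqrt (hp0 cstar)
  have hb2 : b ^ 2 = p c0 := by rw [← hbdef]; exact Real.sq_sqrt (hp0 c0)
  have hx2 : x ^ 2 = q cstar := by rw [← hxdef]; exact Real.sq_sqrt (hq cstar).2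
  have hy2 : y ^ 2 = q c0 := by rw [← hydef]; exact Real.sq_sqrt (hq c0).2
  have hc0mem : c0 ∈ Finset.univ.erase cstar :=
    Finset.mem_erase.mpr ⟨hc0, Finset.mem_univ c0⟩
  set s := (Finset.univ.erase cstar).erase c0 with hsdef
  have hPo : p cstar + (p c0 + ∑ c ∈ s, p c) = 1 := by
    rw [Finset.add_sum_erase _ p hc0mem, Finset.add_sum_erase _ p (Finset.mem_univ cstar)]
    exact hpsum
  have hQo : q cstar + (q c0 + ∑ c ∈ s, q c) = 1 := by
    rw [Finset.add_sum_erase _ q hc0mem, Finset.add_sum_erase _ q (Finset.mem_univ cstar)]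
    exact hqsum
  have hPonn : 0 ≤ ∑ c ∈ s, p c := Finset.sum_nonneg fun c _ => hp0 c
  have hQonn : 0 ≤ ∑ c ∈ s, q c := Finset.sum_nonneg fun c _ => (hq c).2
  have hBCdec : ∑ c, Real.sqrt (p c) * Real.sqrt (q c)
      = a * x + (b * y + ∑ c ∈ s, Real.sqrt (p c) * Real.sqrt (q c)) := by
    rw [← hadef, ← hbdef, ← hxdef, ← hydef]
    rw [← Finset.add_sum_erase _ (fun c => Real.sqrt (p c) * Real.sqrt (q c))
      (Finset.mem_univ cstar), ← Finset.add_sum_erase _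
      (fun c => Real.sqrt (p c) * Real.sqrt (q c)) hc0mem]
  have hT : ∑ c ∈ s, Real.sqrt (p c) * Real.sqrt (q c)
      ≤ Real.sqrt (∑ c ∈ s, p c) * Real.sqrt (∑ c ∈ s, q c) := by
    have h := Real.sum_mul_le_sqrt_mul_sqrt s (fun c => Real.sqrt (p c))
      (fun c => Real.sqrt (q c))
    have e1 : ∑ c ∈ s, Real.sqrt (p c) ^ 2 = ∑ c ∈ s, p c :=
      Finset.sum_congr rfl fun c _ => Real.sq_sqrt (hp0 c)
    have e2 : ∑ c ∈ s, Real.sqrt (q c) ^ 2 = ∑ c ∈ s, q c :=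
      Finset.sum_congr rfl fun c _ => Real.sq_sqrt ((hq c).2)
    rwa [e1, e2] at h
  have hkey := strict_bound ha hb hba hx hxy hPonn hQonn
    (by rw [hx2, hy2]; linarith) (by rw [ha2, hb2]; linarith) hRFnn (by linarith)
  have hmin : minErase cstar hC (fun c => (1 / 2) * (Real.sqrt (p cstar) - Real.sqrt (p c)) ^ 2)
      ≤ (1/2) * (a - b) ^ 2 := by
    rw [minErase]
    have h := Finset.inf'_le (s := Finset.univ.erase cstar)
      (fun c => (1 / 2) * (Real.sqrt (p cstar) - Real.sqrt (p c)) ^ 2) hc0mem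
    exact h.trans_eq (by simp only [hadef, hbdef])
  have hfid : fidelity ρ σ = (rootFidelity ρ σ) ^ 2 := rfl
  linarith [hclose]
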